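/- If m, n are positive integers with m/(n+1) ≥ (1/2)·log₂ 7, then 2^m ≥ rk(W^{⊗n}), and hence there exist local linear maps transforming GHZ^{⊗m} into W^{⊗n} (party-wise regrouped). -/

import Mathlib

open TensorProduct
open Matrix

/-- Tripartite tensor rank: minimal number of product vectors summing to `ψ`. -/
noncomputable def tRank {A B C : Type*} [AddCommGroup A] [Module ℂ A]
    [AddCommGroup B] [Module ℂ B] [AddCommGroup C] [Module ℂ C]
    (ψ : A ⊗[ℂ] (B ⊗[ℂ] C)) : ℕ :=
  sInf {r | ∃ (a : Fin r → A) (b : Fin r → B) (c : Fin r → C),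
    ψ = ∑ i, a i ⊗ₜ[ℂ] (b i ⊗ₜ[ℂ] c i)}

/-- `(ℂ²)^{⊗n}`, realized as functions on `n`-bit strings. -/
abbrev V (n : ℕ) : Type := (Fin n → Bool) → ℂ

/-- the computational-basis vector `|s⟩` of `n` qubits. -/
noncomputable def qb {n : ℕ} (s : Fin n → Bool) : V n := Pi.single s 1

/-- `W^{⊗n}` regrouped party-wise: in copy `k` the excitation goes to party `f k`. -/
noncomputable def Wn (n : ℕ) : V n ⊗[ℂ] (V n ⊗[ℂ] V n) :=
  ∑ f : Fin n → Fin 3,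
    qb (fun k => decide (f k = 0)) ⊗ₜ[ℂ]
      (qb (fun k => decide (f k = 1)) ⊗ₜ[ℂ] qb (fun k => decide (f k = 2)))

/-- `GHZ^{⊗n}` regrouped party-wise: `∑ₓ |x⟩|x⟩|x⟩`. -/
noncomputable def GHZn (n : ℕ) : V n ⊗[ℂ] (V n ⊗[ℂ] V n) :=
  ∑ x : Fin n → Bool, qb x ⊗ₜ[ℂ] (qb x ⊗ₜ[ℂ] qb x)

lemma exists_lam (n : ℕ) : ∃ lam : Fin (2*n+1) → ℂ,
    ∀ d : Fin (2*n+1),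
      (∑ i, lam i * (((i : ℕ) : ℂ) + 1) ^ (n + (d : ℕ))) = if (d : ℕ) = 0 then 1 else 0 := by
  set N := 2*n+1 with hN
  set v : Fin N → ℂ := fun i => ((i : ℕ) : ℂ) + 1 with hv
  have hvinj : Function.Injective v := by
    intro i j hij
    have : ((i : ℕ) : ℂ) = ((j : ℕ) : ℂ) := by
      simpa [hv] using hij
    exact Fin.ext (Nat.cast_injective this)
  have hv0 : ∀ i, v i ≠ 0 := fun i => Nat.cast_add_one_ne_zero (i : ℕ)
  set A : Matrix (Fin N) (Fin N) ℂ := Matrix.of fun d i => v i ^ (n + (d : ℕ)) with hA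
  have hdet : A.det ≠ 0 := by
    have h1 : A = Matrix.of fun d i => (fun j => v j ^ n) i * (Matrix.vandermonde v)ᵀ d i := by
      ext d i
      simp [hA, Matrix.vandermonde, pow_add]
    rw [h1, Matrix.det_mul_row, Matrix.det_transpose, Matrix.det_vandermonde]
    apply mul_ne_zero
    · exact Finset.prod_ne_zero_iff.mpr fun i _ => pow_ne_zero _ (hv0 i)
    · refine Finset.prod_ne_zero_iff.mpr fun i _ => Finset.prod_ne_zero_iff.mpr fun j hj => ?_
      have : i ≠ j := by
        intro e; subst e; simp [Finset.mem_Ioi] at hj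
      exact sub_ne_zero.mpr fun e => this (hvinj e.symm)
  set lam : Fin N → ℂ := A⁻¹.mulVec (Pi.single 0 1) with hlam
  refine ⟨lam, fun d => ?_⟩
  have h1 : A.mulVec lam = Pi.single 0 1 := by
    rw [hlam, Matrix.mulVec_mulVec, Matrix.mul_nonsing_inv _ (isUnit_iff_ne_zero.mpr hdet),
      Matrix.one_mulVec]
  have h2 := congrFun h1 d
  rw [Pi.single_apply] at h2
  have h4 : (if d = 0 then (1:ℂ) else 0) = if (d : ℕ) = 0 then 1 else 0 := by
    by_cases hd : (d : ℕ) = 0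
    · rw [if_pos hd, if_pos (Fin.val_eq_zero_iff.mp hd)]
    · rw [if_neg hd, if_neg (fun e => hd (Fin.val_eq_zero_iff.mpr e))]
  rw [h4] at h2
  rw [← h2]
  simp only [Matrix.mulVec, dotProduct, hA, Matrix.of_apply]
  exact Finset.sum_congr rfl fun i _ => by ring

noncomputable def uco (n : ℕ) (t : ℂ) (S x : Fin n → Bool) : ℂ :=
  ∏ k, (if x k then (if S k then t else 0) else 1)

noncomputable def sg (n : ℕ) (S : Fin n → Bool) : ℂ :=
  ∏ k, (if S k then 1 else -1)

def cnt {n : ℕ} (x y z : Fin n → Bool) (k : Fin n) : ℕ :=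
  (if x k then 1 else 0) + (if y k then 1 else 0) + (if z k then 1 else 0)

lemma wrk_inner_sum (n : ℕ) (t : ℂ) (x y z : Fin n → Bool) :
    ∑ S : Fin n → Bool, sg n S * (uco n t S x * (uco n t S y * uco n t S z))
      = if (∀ k, 1 ≤ cnt x y z k) then t ^ (∑ k, cnt x y z k) else 0 := by
  classical
  have hterm : ∀ S : Fin n → Bool,
      sg n S * (uco n t S x * (uco n t S y * uco n t S z))
        = ∏ k, ((if S k then (1:ℂ) else -1) *
            ((if x k then (if S k then t else 0) else 1) *
              ((if y k then (if S k then t else 0) else 1) *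
                (if z k then (if S k then t else 0) else 1)))) := by
    intro S
    simp only [sg, uco, Finset.prod_mul_distrib]
  rw [Finset.sum_congr rfl fun S _ => hterm S]
  have hswap :
      ∑ S : Fin n → Bool, ∏ k, ((if S k then (1:ℂ) else -1) *
            ((if x k then (if S k then t else 0) else 1) *
              ((if y k then (if S k then t else 0) else 1) *
                (if z k then (if S k then t else 0) else 1))))
      = ∏ k : Fin n, ∑ s : Bool, ((if s then (1:ℂ) else -1) *
            ((if x k then (if s then t else 0) else 1) *
              ((if y k then (if s then t else 0) else 1) *
                (if z k then (if s then t else 0) else 1)))) := by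
    rw [Finset.prod_univ_sum]
    rw [Fintype.piFinset_univ]
  rw [hswap]
  have hk : ∀ k : Fin n, (∑ s : Bool, ((if s then (1:ℂ) else -1) *
            ((if x k then (if s then t else 0) else 1) *
              ((if y k then (if s then t else 0) else 1) *
                (if z k then (if s then t else 0) else 1)))))
        = if 1 ≤ cnt x y z k then t ^ cnt x y z k else 0 := by
    intro k
    cases hx : x k <;> cases hy : y k <;> cases hz : z k <;>
      simp [cnt, hx, hy, hz] <;> ring
  rw [Finset.prod_congr rfl fun k _ => hk k]
  by_cases hc : ∀ k, 1 ≤ cnt x y z k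
  · rw [if_pos hc, Finset.prod_congr rfl fun k _ => if_pos (hc k),
      Finset.prod_pow_eq_pow_sum]
  · rw [if_neg hc]
    push_neg at hc
    obtain ⟨k, hk1⟩ := hc
    exact Finset.prod_eq_zero (Finset.mem_univ k) (if_neg (by omega))

lemma wrk_scalar_id (n : ℕ) (lam : Fin (2*n+1) → ℂ)
    (hlam : ∀ d : Fin (2*n+1),
      (∑ i, lam i * (((i : ℕ) : ℂ) + 1) ^ (n + (d : ℕ))) = if (d : ℕ) = 0 then 1 else 0)
    (x y z : Fin n → Bool) :
    ∑ i : Fin (2*n+1), ∑ S : Fin n → Bool,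
        (lam i * sg n S) * (uco n (((i : ℕ) : ℂ) + 1) S x *
          (uco n (((i : ℕ) : ℂ) + 1) S y * uco n (((i : ℕ) : ℂ) + 1) S z))
      = if (∀ k, cnt x y z k = 1) then 1 else 0 := by
  classical
  have hstep : ∀ i : Fin (2*n+1),
      (∑ S : Fin n → Bool, (lam i * sg n S) * (uco n (((i : ℕ) : ℂ) + 1) S x *
          (uco n (((i : ℕ) : ℂ) + 1) S y * uco n (((i : ℕ) : ℂ) + 1) S z)))
      = lam i * (if (∀ k, 1 ≤ cnt x y z k)
          then (((i : ℕ) : ℂ) + 1) ^ (∑ k, cnt x y z k) else 0) := by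
    intro i
    rw [← wrk_inner_sum n (((i : ℕ) : ℂ) + 1) x y z, Finset.mul_sum]
    exact Finset.sum_congr rfl fun S _ => by ring
  rw [Finset.sum_congr rfl fun i _ => hstep i]
  by_cases hc : ∀ k, 1 ≤ cnt x y z k
  · simp only [if_pos hc]
    have hW1 : n ≤ ∑ k, cnt x y z k := by
      calc n = ∑ _k : Fin n, 1 := by simp
      _ ≤ ∑ k, cnt x y z k := Finset.sum_le_sum fun k _ => hc k
    have hW2 : ∑ k, cnt x y z k ≤ 3 * n := by
      calc ∑ k, cnt x y z k ≤ ∑ _k : Fin n, 3 :=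
            Finset.sum_le_sum fun k _ => by unfold cnt; split_ifs <;> omega
      _ = 3 * n := by simp [mul_comm]
    have hd : ∑ k, cnt x y z k - n < 2*n+1 := by omega
    have := hlam ⟨∑ k, cnt x y z k - n, hd⟩
    simp only at this
    rw [show n + (∑ k, cnt x y z k - n) = ∑ k, cnt x y z k by omega] at this
    rw [this]
    have hiff : (∑ k, cnt x y z k - n = 0) ↔ (∀ k, cnt x y z k = 1) := by
      constructor
      · intro h0
        by_contra hno
        push_neg at hno
        obtain ⟨k, hk1⟩ := hno
        have h2 : (∑ _k : Fin n, 1) < ∑ k, cnt x y z k :=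
          Finset.sum_lt_sum (fun j _ => hc j) ⟨k, Finset.mem_univ k, by have := hc k; omega⟩
        simp at h2
        omega
      · intro hall
        have : ∑ k, cnt x y z k = ∑ _k : Fin n, 1 :=
          Finset.sum_congr rfl fun k _ => hall k
        simp at this
        omega
    by_cases he : ∀ k, cnt x y z k = 1
    · rw [if_pos he, if_pos (hiff.mpr he)]
    · rw [if_neg he, if_neg (fun h0 => he (hiff.mp h0))]
  · have hne : ¬ (∀ k, cnt x y z k = 1) := fun hall => hc fun k => (hall k).ge
    rw [if_neg hne]
    simp only [if_neg hc]
    simp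

noncomputable def uvec (n : ℕ) (t : ℂ) (S : Fin n → Bool) : V n :=
  fun x => uco n t S x

lemma wrk_vec_expand {n : ℕ} (v : V n) : v = ∑ x, v x • qb x := by
  funext y
  rw [Finset.sum_apply]
  simp [qb, Pi.single_apply, smul_eq_mul]

lemma wrk_smul_tmul3 {M : Type*} [AddCommGroup M] [Module ℂ M] (r s t : ℂ) (u v w : M) :
    (r • u) ⊗ₜ[ℂ] ((s • v) ⊗ₜ[ℂ] (t • w)) = (r * (s * t)) • (u ⊗ₜ[ℂ] (v ⊗ₜ[ℂ] w)) := by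
  simp only [← TensorProduct.smul_tmul', TensorProduct.tmul_smul, smul_smul]
  rw [show t * s * r = r * (s * t) by ring]

lemma wrk_tmul_expand {n : ℕ} (a b c : V n) :
    a ⊗ₜ[ℂ] (b ⊗ₜ[ℂ] c)
      = ∑ q : (Fin n → Bool) × (Fin n → Bool) × (Fin n → Bool),
          (a q.1 * (b q.2.1 * c q.2.2)) • (qb q.1 ⊗ₜ[ℂ] (qb q.2.1 ⊗ₜ[ℂ] qb q.2.2)) := by
  rw [Fintype.sum_prod_type]
  conv_lhs => rw [wrk_vec_expand a, wrk_vec_expand b, wrk_vec_expand c]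
  rw [TensorProduct.sum_tmul]
  refine Finset.sum_congr rfl fun x _ => ?_
  rw [Fintype.sum_prod_type]
  rw [TensorProduct.sum_tmul, TensorProduct.tmul_sum]
  refine Finset.sum_congr rfl fun y _ => ?_
  rw [TensorProduct.tmul_sum, TensorProduct.tmul_sum]
  refine Finset.sum_congr rfl fun z _ => ?_
  exact wrk_smul_tmul3 (a x) (b y) (c z) (qb x) (qb y) (qb z)

lemma wrk_Wn_coeff (n : ℕ) :
    Wn n = ∑ q : (Fin n → Bool) × (Fin n → Bool) × (Fin n → Bool),
      (if (∀ k, cnt q.1 q.2.1 q.2.2 k = 1) then (1:ℂ) else 0) •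
        (qb q.1 ⊗ₜ[ℂ] (qb q.2.1 ⊗ₜ[ℂ] qb q.2.2)) := by
  classical
  have hsmul : ∀ q : (Fin n → Bool) × (Fin n → Bool) × (Fin n → Bool),
      (if (∀ k, cnt q.1 q.2.1 q.2.2 k = 1) then (1:ℂ) else 0) •
        (qb q.1 ⊗ₜ[ℂ] (qb q.2.1 ⊗ₜ[ℂ] qb q.2.2))
      = if (∀ k, cnt q.1 q.2.1 q.2.2 k = 1)
          then (qb q.1 ⊗ₜ[ℂ] (qb q.2.1 ⊗ₜ[ℂ] qb q.2.2)) else 0 := by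
    intro q; split_ifs <;> simp
  rw [Finset.sum_congr rfl fun q _ => hsmul q, ← Finset.sum_filter]
  rw [Wn]
  refine Finset.sum_nbij'
    (fun f => (fun k => decide (f k = 0), fun k => decide (f k = 1), fun k => decide (f k = 2)))
    (fun q => fun k => if q.1 k then 0 else if q.2.1 k then 1 else 2)
    ?_ ?_ ?_ ?_ ?_
  · intro f _
    simp only [Finset.mem_filter, Finset.mem_univ, true_and]
    intro k
    have : f k = 0 ∨ f k = 1 ∨ f k = 2 := by omega
    rcases this with h | h | h <;> simp [cnt, h]
  · intro q _
    exact Finset.mem_univ _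
  · intro f _
    funext k
    have : f k = 0 ∨ f k = 1 ∨ f k = 2 := by omega
    rcases this with h | h | h <;> simp [h]
  · intro q hq
    simp only [Finset.mem_filter, Finset.mem_univ, true_and] at hq
    have hk := hq
    ext k
    · have := hk k
      unfold cnt at this
      cases h1 : q.1 k <;> cases h2 : q.2.1 k <;> cases h3 : q.2.2 k <;>
        simp [h1, h2, h3] at this ⊢
    · have := hk k
      unfold cnt at this
      cases h1 : q.1 k <;> cases h2 : q.2.1 k <;> cases h3 : q.2.2 k <;>
        simp [h1, h2, h3] at this ⊢
    · have := hk k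
      unfold cnt at this
      cases h1 : q.1 k <;> cases h2 : q.2.1 k <;> cases h3 : q.2.2 k <;>
        simp [h1, h2, h3] at this ⊢
  · intro f _
    rfl

lemma wrk_Wn_decomp (n : ℕ) :
    ∃ a b c : Fin ((2*n+1) * 2^n) → V n,
      Wn n = ∑ j, a j ⊗ₜ[ℂ] (b j ⊗ₜ[ℂ] c j) := by
  classical
  obtain ⟨lam, hlam⟩ := exists_lam n
  have hmain : Wn n = ∑ p : Fin (2*n+1) × (Fin n → Bool),
      ((lam p.1 * sg n p.2) • uvec n (((p.1 : ℕ) : ℂ) + 1) p.2) ⊗ₜ[ℂ]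
        (uvec n (((p.1 : ℕ) : ℂ) + 1) p.2 ⊗ₜ[ℂ] uvec n (((p.1 : ℕ) : ℂ) + 1) p.2) := by
    have hterm : ∀ p : Fin (2*n+1) × (Fin n → Bool),
        ((lam p.1 * sg n p.2) • uvec n (((p.1 : ℕ) : ℂ) + 1) p.2) ⊗ₜ[ℂ]
          (uvec n (((p.1 : ℕ) : ℂ) + 1) p.2 ⊗ₜ[ℂ] uvec n (((p.1 : ℕ) : ℂ) + 1) p.2)
        = ∑ q : (Fin n → Bool) × (Fin n → Bool) × (Fin n → Bool),
            ((lam p.1 * sg n p.2) *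
              (uco n (((p.1 : ℕ) : ℂ) + 1) p.2 q.1 *
                (uco n (((p.1 : ℕ) : ℂ) + 1) p.2 q.2.1 *
                  uco n (((p.1 : ℕ) : ℂ) + 1) p.2 q.2.2))) •
              (qb q.1 ⊗ₜ[ℂ] (qb q.2.1 ⊗ₜ[ℂ] qb q.2.2)) := by
      intro p
      rw [← TensorProduct.smul_tmul', wrk_tmul_expand, Finset.smul_sum]
      exact Finset.sum_congr rfl fun q _ => by rw [smul_smul]; rfl
    rw [Finset.sum_congr rfl fun p _ => hterm p, Finset.sum_comm, wrk_Wn_coeff n]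
    refine Finset.sum_congr rfl fun q _ => ?_
    rw [← Finset.sum_smul]
    congr 1
    rw [Fintype.sum_prod_type]
    exact (wrk_scalar_id n lam hlam q.1 q.2.1 q.2.2).symm
  have hcard : Fintype.card (Fin (2*n+1) × (Fin n → Bool)) = (2*n+1) * 2^n := by
    simp [Fintype.card_fun]
  let e : Fin ((2*n+1) * 2^n) ≃ Fin (2*n+1) × (Fin n → Bool) :=
    (Fintype.equivFinOfCardEq hcard).symm
  refine ⟨fun j => (lam (e j).1 * sg n (e j).2) • uvec n (((((e j).1 : Fin (2*n+1)) : ℕ) : ℂ) + 1) (e j).2,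
    fun j => uvec n ((((e j).1 : ℕ) : ℂ) + 1) (e j).2,
    fun j => uvec n ((((e j).1 : ℕ) : ℂ) + 1) (e j).2, ?_⟩
  rw [hmain]
  exact (Equiv.sum_comp e _).symm

lemma wrk_nat_key (m n : ℕ) (hn : 1 ≤ n) (h47 : 7^(n+1) ≤ 4^m) :
    (2*n+1) * 2^n ≤ 2^m := by
  by_cases hsmall : n ≤ 5
  · -- small cases : get a lower bound on m first
    interval_cases n
    · have h2 : (4:ℕ)^2 < 4^m := lt_of_lt_of_le (by norm_num) h47
      have hm : 2 < m := (Nat.pow_lt_pow_iff_right (by norm_num)).mp h2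
      calc (2*1+1) * 2^1 ≤ 2^3 := by norm_num
      _ ≤ 2^m := Nat.pow_le_pow_right (by norm_num) hm
    · have h2 : (4:ℕ)^4 < 4^m := lt_of_lt_of_le (by norm_num) h47
      have hm : 4 < m := (Nat.pow_lt_pow_iff_right (by norm_num)).mp h2
      calc (2*2+1) * 2^2 ≤ 2^5 := by norm_num
      _ ≤ 2^m := Nat.pow_le_pow_right (by norm_num) hm
    · have h2 : (4:ℕ)^5 < 4^m := lt_of_lt_of_le (by norm_num) h47
      have hm : 5 < m := (Nat.pow_lt_pow_iff_right (by norm_num)).mp h2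
      calc (2*3+1) * 2^3 ≤ 2^6 := by norm_num
      _ ≤ 2^m := Nat.pow_le_pow_right (by norm_num) hm
    · have h2 : (4:ℕ)^7 < 4^m := lt_of_lt_of_le (by norm_num) h47
      have hm : 7 < m := (Nat.pow_lt_pow_iff_right (by norm_num)).mp h2
      calc (2*4+1) * 2^4 ≤ 2^8 := by norm_num
      _ ≤ 2^m := Nat.pow_le_pow_right (by norm_num) hm
    · have h2 : (4:ℕ)^8 < 4^m := lt_of_lt_of_le (by norm_num) h47
      have hm : 8 < m := (Nat.pow_lt_pow_iff_right (by norm_num)).mp h2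
      calc (2*5+1) * 2^5 ≤ 2^9 := by norm_num
      _ ≤ 2^m := Nat.pow_le_pow_right (by norm_num) hm
  · push_neg at hsmall
    have h6 : 6 ≤ n := hsmall
    have hsq : (2*n+1)^2 * 4^n ≤ 7^(n+1) := by
      clear h47 hn hsmall
      induction n, h6 using Nat.le_induction with
      | base => norm_num
      | succ n hn ih =>
        have hstep : 4 * (2*(n+1)+1)^2 ≤ 7 * (2*n+1)^2 := by nlinarith
        calc (2*(n+1)+1)^2 * 4^(n+1) = (4 * (2*(n+1)+1)^2) * 4^n := by ring
        _ ≤ (7 * (2*n+1)^2) * 4^n := Nat.mul_le_mul_right _ hstep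
        _ = 7 * ((2*n+1)^2 * 4^n) := by ring
        _ ≤ 7 * 7^(n+1) := Nat.mul_le_mul_left _ ih
        _ = 7^(n+1+1) := by ring
    have hfin : ((2*n+1) * 2^n)^2 ≤ (2^m)^2 := by
      calc ((2*n+1) * 2^n)^2 = (2*n+1)^2 * 4^n := by
            rw [mul_pow, ← pow_mul]
            congr 1
            rw [show (4:ℕ) = 2^2 by norm_num, ← pow_mul, mul_comm]
      _ ≤ 7^(n+1) := hsq
      _ ≤ 4^m := h47
      _ = (2^m)^2 := by
            rw [← pow_mul, show (4:ℕ) = 2^2 by norm_num, ← pow_mul, mul_comm]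
    exact (Nat.pow_le_pow_iff_left (by norm_num)).mp hfin

lemma wrk_real_key (m n : ℕ) (h : (m : ℝ) / (n + 1) ≥ (1 / 2) * Real.logb 2 7) :
    7^(n+1) ≤ 4^m := by
  have hn1 : (0:ℝ) < (n:ℝ) + 1 := by positivity
  have hlog : Real.logb 2 7 * ((n:ℝ) + 1) ≤ 2 * m := by
    rw [ge_iff_le, le_div_iff₀ hn1] at h
    nlinarith
  have h7 : (7:ℝ)^(n+1) ≤ (4:ℝ)^m := by
    have e1 : (7:ℝ)^(n+1) = (2:ℝ) ^ (Real.logb 2 7 * ((n:ℝ)+1)) := by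
      rw [Real.rpow_mul (by norm_num), Real.rpow_logb (by norm_num) (by norm_num) (by norm_num)]
      rw [show ((n:ℝ) + 1) = ((n+1 : ℕ) : ℝ) by push_cast; ring, Real.rpow_natCast]
    have e2 : (2:ℝ) ^ ((2*m : ℕ) : ℝ) = (4:ℝ)^m := by
      rw [Real.rpow_natCast, pow_mul]
      norm_num
    rw [e1, ← e2]
    apply Real.rpow_le_rpow_of_exponent_le (by norm_num)
    push_cast
    linarith
  have := h7
  rw [show (7:ℝ)^(n+1) = ((7^(n+1) : ℕ) : ℝ) by push_cast; ring,
    show (4:ℝ)^m = ((4^m : ℕ) : ℝ) by push_cast; ring] at this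
  exact_mod_cast this

theorem GHZ_to_W_rate (m n : ℕ) (hm : 0 < m) (hn : 0 < n)
    (h : (m : ℝ) / (n + 1) ≥ (1 / 2) * Real.logb 2 7) :
    tRank (Wn n) ≤ 2 ^ m ∧
    ∃ (LA LB LC : V m →ₗ[ℂ] V n),
      (TensorProduct.map LA (TensorProduct.map LB LC)) (GHZn m) = Wn n := by
  classical
  have h47 : 7^(n+1) ≤ 4^m := wrk_real_key m n h
  have hkey : (2*n+1) * 2^n ≤ 2^m := wrk_nat_key m n hn h47
  have hmemN : ((2*n+1) * 2^n) ∈ {r | ∃ (a : Fin r → V n) (b : Fin r → V n) (c : Fin r → V n),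
      Wn n = ∑ i, a i ⊗ₜ[ℂ] (b i ⊗ₜ[ℂ] c i)} := wrk_Wn_decomp n
  have hrank : tRank (Wn n) ≤ (2*n+1) * 2^n := Nat.sInf_le hmemN
  have hle : tRank (Wn n) ≤ 2^m := le_trans hrank hkey
  refine ⟨hle, ?_⟩
  have hmem : tRank (Wn n) ∈ {r | ∃ (a : Fin r → V n) (b : Fin r → V n) (c : Fin r → V n),
      Wn n = ∑ i, a i ⊗ₜ[ℂ] (b i ⊗ₜ[ℂ] c i)} := Nat.sInf_mem ⟨_, hmemN⟩
  obtain ⟨a, b, c, habc⟩ := hmem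
  -- embedding of Fin (tRank …) into the basis index of V m
  have hcard : Fintype.card (Fin (tRank (Wn n))) ≤ Fintype.card (Fin m → Bool) := by
    simpa [Fintype.card_fun] using hle
  obtain ⟨ι⟩ := Function.Embedding.nonempty_iff_card_le.mpr hcard
  set gA : (Fin m → Bool) → V n :=
    fun x => if h : ∃ i, ι i = x then a h.choose else 0 with hgA
  set gB : (Fin m → Bool) → V n :=
    fun x => if h : ∃ i, ι i = x then b h.choose else 0 with hgB
  set gC : (Fin m → Bool) → V n :=
    fun x => if h : ∃ i, ι i = x then c h.choose else 0 with hgC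
  refine ⟨(Pi.basisFun ℂ (Fin m → Bool)).constr ℂ gA,
    (Pi.basisFun ℂ (Fin m → Bool)).constr ℂ gB,
    (Pi.basisFun ℂ (Fin m → Bool)).constr ℂ gC, ?_⟩
  have hqb : ∀ x : Fin m → Bool, qb x = (Pi.basisFun ℂ (Fin m → Bool)) x := by
    intro x; rw [Pi.basisFun_apply]; rfl
  rw [GHZn, map_sum]
  have hterm : ∀ x : Fin m → Bool,
      (TensorProduct.map ((Pi.basisFun ℂ (Fin m → Bool)).constr ℂ gA)
        (TensorProduct.map ((Pi.basisFun ℂ (Fin m → Bool)).constr ℂ gB)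
          ((Pi.basisFun ℂ (Fin m → Bool)).constr ℂ gC)))
        (qb x ⊗ₜ[ℂ] (qb x ⊗ₜ[ℂ] qb x))
      = gA x ⊗ₜ[ℂ] (gB x ⊗ₜ[ℂ] gC x) := by
    intro x
    rw [TensorProduct.map_tmul, TensorProduct.map_tmul, hqb,
      Module.Basis.constr_basis, Module.Basis.constr_basis, Module.Basis.constr_basis]
  rw [Finset.sum_congr rfl fun x _ => hterm x]
  -- restrict the sum to the range of ι
  have hzero : ∀ x ∈ Finset.univ, x ∉ Finset.image ι Finset.univ →
      gA x ⊗ₜ[ℂ] (gB x ⊗ₜ[ℂ] gC x) = 0 := by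
    intro x _ hx
    have hno : ¬ ∃ i, ι i = x := by
      intro ⟨i, hi⟩
      exact hx (Finset.mem_image.mpr ⟨i, Finset.mem_univ i, hi⟩)
    rw [hgA]
    simp only [dif_neg hno]
    rw [TensorProduct.zero_tmul]
  rw [← Finset.sum_subset (Finset.subset_univ (Finset.image ι Finset.univ)) hzero]
  rw [Finset.sum_image (fun i _ j _ e => ι.injective e)]
  conv_rhs => rw [habc]
  refine Finset.sum_congr rfl fun i _ => ?_
  have hch : ∀ (hh : ∃ i', ι i' = ι i), hh.choose = i := fun hh => ι.injective hh.choose_spec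
  have hA : gA (ι i) = a i := by
    simp only [hgA]
    rw [dif_pos (⟨i, rfl⟩ : ∃ i', ι i' = ι i), hch]
  have hB : gB (ι i) = b i := by
    simp only [hgB]
    rw [dif_pos (⟨i, rfl⟩ : ∃ i', ι i' = ι i), hch]
  have hC : gC (ι i) = c i := by
    simp only [hgC]
    rw [dif_pos (⟨i, rfl⟩ : ∃ i', ι i' = ι i), hch]
  rw [hA, hB, hC]
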